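/- Let $\mathcal{F}$ be an IFS of contractions with Lipschitz constants $L_i \in (0,1)$ over a complete metric space whose attractor $K$ is connected, has positive diameter, and such that $\mathcal{F}$ has no branching. Then for every $n$ and all words $w, u \in A^n$, the intersection $\phi_w(K) \cap \phi_u(K)$ contains at most one point. -/

import Mathlib

open Set

/-- `φ_w = φ_{i₁} ∘ ⋯ ∘ φ_{iₙ}` for a word `w = i₁ ⋯ iₙ`. -/
noncomputable def compWord {X : Type*} {k : ℕ} (φ : Fin k → X → X)
    (w : List (Fin k)) : X → X :=
  w.foldr (fun i g => φ i ∘ g) id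

lemma compWord_append {X : Type*} {k : ℕ} (φ : Fin k → X → X) (v t : List (Fin k)) :
    compWord φ (v ++ t) = compWord φ v ∘ compWord φ t := by
  induction v with
  | nil => rfl
  | cons i v ih =>
      show φ i ∘ compWord φ (v ++ t) = (φ i ∘ compWord φ v) ∘ compWord φ t
      rw [ih]
      rfl

/-- From a connected set covered by finitely many nonempty closed subsets, any two pieces are
connected by a chain of pairwise intersecting pieces. -/
lemma chainConn {α ι : Type*} [TopologicalSpace α] [Finite ι]
    (F : ι → Set α) (C : Set α) (hC : IsPreconnected C)
    (hcl : ∀ j, IsClosed (F j)) (hne : ∀ j, (F j).Nonempty)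
    (hsub : ∀ j, F j ⊆ C) (hcov : C ⊆ ⋃ j, F j) (j j' : ι) :
    Relation.ReflTransGen (fun a b => (F a ∩ F b).Nonempty) j j' := by
  by_contra hj'
  set R : ι → ι → Prop := fun a b => (F a ∩ F b).Nonempty with hR
  set S : Set ι := {b | Relation.ReflTransGen R j b} with hS
  have hU1 : IsClosed (⋃ a ∈ S, F a) := Set.Finite.isClosed_biUnion S.toFinite fun i _ => hcl i
  have hU2 : IsClosed (⋃ a ∈ Sᶜ, F a) := Set.Finite.isClosed_biUnion Sᶜ.toFinite fun i _ => hcl i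
  have hcover : C ⊆ (⋃ a ∈ S, F a) ∪ (⋃ a ∈ Sᶜ, F a) := by
    intro z hz
    obtain ⟨a, haz⟩ := Set.mem_iUnion.mp (hcov hz)
    by_cases haS : a ∈ S
    · exact Or.inl (Set.mem_biUnion haS haz)
    · exact Or.inr (Set.mem_biUnion haS haz)
  obtain ⟨p₁, hp₁⟩ := hne j
  obtain ⟨p₂, hp₂⟩ := hne j'
  have h1 : (C ∩ ⋃ a ∈ S, F a).Nonempty :=
    ⟨p₁, hsub j hp₁, Set.mem_biUnion (Relation.ReflTransGen.refl) hp₁⟩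
  have h2 : (C ∩ ⋃ a ∈ Sᶜ, F a).Nonempty :=
    ⟨p₂, hsub j' hp₂, Set.mem_biUnion hj' hp₂⟩
  obtain ⟨z, hzC, hz1, hz2⟩ := isPreconnected_closed_iff.mp hC _ _ hU1 hU2 hcover h1 h2
  obtain ⟨a, haS, hza⟩ := Set.mem_iUnion₂.mp hz1
  obtain ⟨b, hbS, hzb⟩ := Set.mem_iUnion₂.mp hz2
  exact hbS (Relation.ReflTransGen.tail haS ⟨z, hza, hzb⟩)

lemma rtg_mem {α : Type*} {R : α → α → Prop} {T : Set α}
    (habs : ∀ ⦃b c⦄, b ∈ T → R b c → c ∈ T) {a z : α}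
    (h : Relation.ReflTransGen R a z) (ha : a ∈ T) : z ∈ T := by
  induction h with
  | refl => exact ha
  | tail h1 h2 ih => exact habs ih h2

lemma exists_adj_of_walk {V : Type*} {G : SimpleGraph V} {a b : V} (hab : a ≠ b)
    (p : G.Walk a b) : ∃ z ∈ p.support, G.Adj a z := by
  cases p with
  | nil => exact absurd rfl hab
  | cons h q =>
      exact ⟨_, by
        rw [SimpleGraph.Walk.support_cons]
        exact List.mem_cons_of_mem _ q.start_mem_support, h⟩

lemma two_adj_of_walk {V : Type*} {G : SimpleGraph V} {a b : V} (p : G.Walk a b) :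
    p.IsPath → ∀ v, v ∈ p.support → v ≠ a → v ≠ b →
    ∃ z₁ z₂, z₁ ∈ p.support ∧ z₂ ∈ p.support ∧ z₁ ≠ z₂ ∧ G.Adj v z₁ ∧ G.Adj v z₂ := by
  induction p with
  | nil =>
      intro _ v hv hva _
      rw [SimpleGraph.Walk.support_nil] at hv
      simp only [List.mem_singleton] at hv
      exact absurd hv hva
  | @cons a c b h q ih =>
      intro hp v hv hva hvb
      rw [SimpleGraph.Walk.support_cons, List.mem_cons] at hv
      rcases hv with rfl | hvq
      · exact absurd rfl hva
      by_cases hvc : v = c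
      · subst hvc
        obtain ⟨z, hz, hadj⟩ := exists_adj_of_walk hvb q
        have hcons := (SimpleGraph.Walk.cons_isPath_iff h q).mp hp
        refine ⟨a, z, ?_, ?_, ?_, h.symm, hadj⟩
        · rw [SimpleGraph.Walk.support_cons]; exact List.mem_cons_self
        · rw [SimpleGraph.Walk.support_cons]; exact List.mem_cons_of_mem _ hz
        · rintro rfl; exact hcons.2 hz
      · obtain ⟨z₁, z₂, h1, h2, hne, ha1, ha2⟩ := ih hp.of_cons v hvq hvc hvb
        refine ⟨z₁, z₂, ?_, ?_, hne, ha1, ha2⟩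
        · rw [SimpleGraph.Walk.support_cons]; exact List.mem_cons_of_mem _ h1
        · rw [SimpleGraph.Walk.support_cons]; exact List.mem_cons_of_mem _ h2

/-- Every vertex on a simple path, augmented with "cross partners" at its two (distinct)
endpoints, has two distinct adjacent vertices within the augmented vertex set. -/
lemma degreeSide {Vm VN : Type*} {G : SimpleGraph Vm} (Adj : VN → VN → Prop)
    (fp fq : Vm → VN) (hinj : Function.Injective fp)
    (hmap : ∀ {a b : Vm}, G.Adj a b → Adj (fp a) (fp b))
    (hdisj : ∀ a b, fp a ≠ fq b)
    {a₀ a₁ : Vm} (h01 : a₀ ≠ a₁) (p : G.Walk a₀ a₁) (hp : p.IsPath)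
    (b₀ b₁ : Vm) (hx : Adj (fp a₀) (fq b₀)) (hy : Adj (fp a₁) (fq b₁)) :
    ∀ s ∈ p.support, ∃ z₁ z₂ : VN, z₁ ≠ z₂ ∧ Adj (fp s) z₁ ∧ Adj (fp s) z₂ ∧
      ((∃ t ∈ p.support, fp t = z₁) ∨ z₁ = fq b₀ ∨ z₁ = fq b₁) ∧
      ((∃ t ∈ p.support, fp t = z₂) ∨ z₂ = fq b₀ ∨ z₂ = fq b₁) := by
  intro s hs
  by_cases hs0 : s = a₀
  · subst hs0
    obtain ⟨z, hz, hadj⟩ := exists_adj_of_walk h01 p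
    exact ⟨fp z, fq b₀, hdisj z b₀, hmap hadj, hx, Or.inl ⟨z, hz, rfl⟩, Or.inr (Or.inl rfl)⟩
  by_cases hs1 : s = a₁
  · subst hs1
    obtain ⟨z, hz, hadj⟩ := exists_adj_of_walk (Ne.symm h01) p.reverse
    have hz' : z ∈ p.support := by
      rwa [SimpleGraph.Walk.support_reverse, List.mem_reverse] at hz
    exact ⟨fp z, fq b₁, hdisj z b₁, hmap hadj, hy, Or.inl ⟨z, hz', rfl⟩, Or.inr (Or.inr rfl)⟩
  · obtain ⟨z₁, z₂, h1, h2, hne, ha1, ha2⟩ := two_adj_of_walk p hp s hs hs0 hs1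
    exact ⟨fp z₁, fp z₂, fun hh => hne (hinj hh), hmap ha1, hmap ha2,
      Or.inl ⟨z₁, h1, rfl⟩, Or.inl ⟨z₂, h2, rfl⟩⟩

lemma three_le_ncard {α : Type*} {s : Set α} (hfin : s.Finite) {p q r : α}
    (hp : p ∈ s) (hq : q ∈ s) (hr : r ∈ s) (hpq : p ≠ q) (hpr : p ≠ r) (hqr : q ≠ r) :
    3 ≤ s.ncard := by
  have h1 : ({p, q, r} : Set α) ⊆ s := by
    intro t ht
    rcases ht with rfl | rfl | rfl <;> assumption
  have h2 : ({p, q, r} : Set α).ncard = 3 := by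
    rw [Set.ncard_insert_of_notMem (by simp [hpq, hpr])
      ((Set.finite_singleton r).insert q), Set.ncard_pair hqr]
  calc (3 : ℕ) = ({p, q, r} : Set α).ncard := h2.symm
    _ ≤ s.ncard := Set.ncard_le_ncard h1 hfin

/-- Within the piece `compWord φ w '' K`, any two subcylinders of a given depth `m`
are connected by a chain: reachability in the intersection graph. -/
lemma exists_path_in_side {X : Type*} [MetricSpace X] {k : ℕ} (φ : Fin k → X → X) (K : Set X)
    (hKne : K.Nonempty) (hKc : IsCompact K) (hKconn : IsConnected K)
    (hcont : ∀ v : List (Fin k), Continuous (compWord φ v))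
    (hsub : ∀ v : List (Fin k), compWord φ v '' K ⊆ K)
    (hcov : ∀ (M : ℕ) z, z ∈ K → ∃ a : List (Fin k), a.length = M ∧ z ∈ compWord φ a '' K)
    (w : List (Fin k)) (m : ℕ) (a c : {l : List (Fin k) // l.length = m}) :
    (SimpleGraph.fromRel (fun a c : {l : List (Fin k) // l.length = m} =>
      ((compWord φ (w ++ a.val) '' K) ∩ (compWord φ (w ++ c.val) '' K)).Nonempty)).Reachable
      a c := by
  classical
  haveI : Finite {l : List (Fin k) // l.length = m} :=
    (List.finite_length_eq (Fin k) m).to_subtype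
  have hconn' : IsPreconnected (compWord φ w '' K) :=
    (hKconn.image _ (hcont w).continuousOn).isPreconnected
  have hrtg := chainConn
      (fun t : {l : List (Fin k) // l.length = m} => compWord φ (w ++ t.val) '' K)
      (compWord φ w '' K) hconn'
      (fun t => ((hKc.image (hcont _)).isClosed))
      (fun t => hKne.image _)
      (fun t => by
        show compWord φ (w ++ t.val) '' K ⊆ compWord φ w '' K
        rw [compWord_append, Set.image_comp]
        exact Set.image_mono (hsub t.val))
      (by
        rintro z ⟨z₀, hz₀, rfl⟩
        obtain ⟨a', ha', z₁, hz₁, hcw⟩ := hcov m z₀ hz₀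
        refine Set.mem_iUnion.mpr ⟨⟨a', ha'⟩, z₁, hz₁, ?_⟩
        rw [compWord_append]
        show compWord φ w (compWord φ a' z₁) = _
        rw [hcw])
      a c
  induction hrtg with
  | refl => exact SimpleGraph.Reachable.refl _
  | @tail b c h1 hR ih =>
      by_cases hbc : b = c
      · exact hbc ▸ ih
      · exact ih.trans (SimpleGraph.Adj.reachable
          (by rw [SimpleGraph.fromRel_adj]; exact ⟨hbc, Or.inl hR⟩))

/-- For an IFS with connected attractor of positive diameter and no branching, cylinders of
the same generation intersect in at most one point. -/
theorem stmt12 {X : Type*} [MetricSpace X] [CompleteSpace X] {k : ℕ}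
    (φ : Fin k → X → X) (L : Fin k → ℝ)
    (hL : ∀ i, 0 < L i ∧ L i < 1)
    (hLip : ∀ i x y, dist (φ i x) (φ i y) ≤ L i * dist x y)
    (K : Set X) (hKne : K.Nonempty) (hKc : IsCompact K)
    (hK : K = ⋃ i, φ i '' K) (hconn : IsConnected K)
    (hdiam : 0 < Metric.diam K)
    (hnb : ∀ (n : ℕ) (w : List (Fin k)), w.length = n →
      {u : List (Fin k) | u.length = n ∧ u ≠ w ∧
        (compWord φ u '' K ∩ compWord φ w '' K).Nonempty}.ncard ≤ 2)
    (n : ℕ) (w u : List (Fin k)) (hw : w.length = n) (hu : u.length = n)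
    (hne : w ≠ u) :
    (compWord φ w '' K ∩ compWord φ u '' K).Subsingleton := by
  classical
  intro x hx y hy
  by_contra hxy
  -- basic facts
  have hφK : ∀ i, φ i '' K ⊆ K := fun i => (Set.subset_iUnion (fun j => φ j '' K) i).trans hK.ge
  have hφcont : ∀ i, Continuous (φ i) := by
    intro i
    have : LipschitzWith ⟨L i, (hL i).1.le⟩ (φ i) :=
      LipschitzWith.of_dist_le_mul fun a b => by exact hLip i a b
    exact this.continuous
  have hcwcont : ∀ v : List (Fin k), Continuous (compWord φ v) := by
    intro v
    induction v with
    | nil => exact continuous_id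
    | cons i t ih => exact (hφcont i).comp ih
  have cylsub : ∀ v : List (Fin k), compWord φ v '' K ⊆ K := by
    intro v
    induction v with
    | nil => simp [compWord]
    | cons i t ih =>
        have h1 : compWord φ (i :: t) '' K = φ i '' (compWord φ t '' K) :=
          Set.image_comp (φ i) (compWord φ t) K
        rw [h1]
        exact (Set.image_mono ih).trans (hφK i)
  have hKb : Bornology.IsBounded K := hKc.isBounded
  have cylcl : ∀ v : List (Fin k), IsClosed (compWord φ v '' K) := fun v =>
    (hKc.image (hcwcont v)).isClosed
  have cylne : ∀ v : List (Fin k), (compWord φ v '' K).Nonempty := fun v => hKne.image _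
  -- the alphabet has at least two distinct letters
  have hKne' := hKne
  obtain ⟨z₀, hz₀⟩ := hKne'
  obtain ⟨i₀, hi₀⟩ : ∃ i : Fin k, z₀ ∈ φ i '' K := Set.mem_iUnion.mp (hK.le hz₀)
  obtain ⟨j₀, hj₀⟩ : ∃ j : Fin k, j ≠ i₀ := by
    by_contra hcon
    push_neg at hcon
    exact hne (List.ext_get (hw.trans hu.symm) fun a h1 h2 => by rw [hcon (w.get ⟨a, h1⟩), hcon (u.get ⟨a, h2⟩)])
  haveI : Nonempty (Fin k) := ⟨i₀⟩
  -- the maximal contraction ratio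
  set Λ : ℝ := Finset.univ.sup' Finset.univ_nonempty L with hΛdef
  have hLle : ∀ i, L i ≤ Λ := fun i => Finset.le_sup' L (Finset.mem_univ i)
  have hΛlt1 : Λ < 1 := (Finset.sup'_lt_iff _).mpr fun i _ => (hL i).2
  have hΛ0 : 0 ≤ Λ := le_trans (hL i₀).1.le (hLle i₀)
  -- diameter bounds for cylinders
  have step : ∀ (i : Fin k) (S : Set X), S ⊆ K →
      Metric.diam (φ i '' S) ≤ L i * Metric.diam S := by
    intro i S hS
    apply Metric.diam_le_of_forall_dist_le (mul_nonneg (hL i).1.le Metric.diam_nonneg)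
    rintro _ ⟨p, hp, rfl⟩ _ ⟨q, hq, rfl⟩
    exact (hLip i p q).trans (mul_le_mul_of_nonneg_left
      (Metric.dist_le_diam_of_mem (hKb.subset hS) hp hq) (hL i).1.le)
  have hdiam_le : ∀ v : List (Fin k),
      Metric.diam (compWord φ v '' K) ≤ Λ ^ v.length * Metric.diam K := by
    intro v
    induction v with
    | nil => simp [compWord]
    | cons i t ih =>
        have h1 : compWord φ (i :: t) '' K = φ i '' (compWord φ t '' K) :=
          Set.image_comp (φ i) (compWord φ t) K
        calc Metric.diam (compWord φ (i :: t) '' K)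
            = Metric.diam (φ i '' (compWord φ t '' K)) := by rw [h1]
          _ ≤ L i * Metric.diam (compWord φ t '' K) := step i _ (cylsub t)
          _ ≤ Λ * (Λ ^ t.length * Metric.diam K) :=
              mul_le_mul (hLle i) ih Metric.diam_nonneg hΛ0
          _ = Λ ^ (i :: t).length * Metric.diam K := by
              rw [List.length_cons, pow_succ]; ring
  -- choose the depth m
  have hdxy : 0 < dist x y := dist_pos.mpr hxy
  have htend : Filter.Tendsto (fun s : ℕ => Λ ^ n * Metric.diam K * Λ ^ s)
      Filter.atTop (nhds 0) := by
    have h := tendsto_pow_atTop_nhds_zero_of_lt_one hΛ0 hΛlt1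
    simpa using h.const_mul (Λ ^ n * Metric.diam K)
  obtain ⟨m, hm⟩ : ∃ m : ℕ, Λ ^ (n + m) * Metric.diam K < dist x y := by
    obtain ⟨m, hm'⟩ := (htend.eventually_lt_const hdxy).exists
    refine ⟨m, ?_⟩
    have h' : Λ ^ (n + m) * Metric.diam K = Λ ^ n * Metric.diam K * Λ ^ m := by
      rw [pow_add]; ring
    rw [h']; exact hm'
  -- any cylinder at level n+m is small
  have hsmall : ∀ v : List (Fin k), v.length = n + m → ∀ p q,
      p ∈ compWord φ v '' K → q ∈ compWord φ v '' K → dist p q < dist x y := by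
    intro v hv p q hp hq
    have h1 : dist p q ≤ Metric.diam (compWord φ v '' K) :=
      Metric.dist_le_diam_of_mem (hKb.subset (cylsub v)) hp hq
    have h2 := hdiam_le v
    rw [hv] at h2
    linarith
  -- cover lemma
  have hcover : ∀ (M : ℕ) z, z ∈ K → ∃ a : List (Fin k),
      a.length = M ∧ z ∈ compWord φ a '' K := by
    intro M
    induction M with
    | zero => intro z hz; exact ⟨[], rfl, ⟨z, hz, rfl⟩⟩
    | succ M ih =>
        intro z hz
        obtain ⟨i, z₁, hz₁, hfz⟩ : ∃ i, ∃ z₁, z₁ ∈ K ∧ φ i z₁ = z := by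
          have h := hK.le hz
          simpa using h
        obtain ⟨a, ha, z₂, hz₂, hcw⟩ := ih z₁ hz₁
        refine ⟨i :: a, by simp [ha], z₂, hz₂, ?_⟩
        show φ i (compWord φ a z₂) = z
        rw [hcw, hfz]
  have hsplit : ∀ (v : List (Fin k)) z, z ∈ compWord φ v '' K →
      ∃ a : List (Fin k), a.length = m ∧ z ∈ compWord φ (v ++ a) '' K := by
    rintro v z ⟨z₀, hz₀, rfl⟩
    obtain ⟨a, ha, z₁, hz₁, hcw⟩ := hcover m z₀ hz₀
    refine ⟨a, ha, z₁, hz₁, ?_⟩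
    rw [compWord_append]
    show compWord φ v (compWord φ a z₁) = _
    rw [hcw]
  -- the four small cylinders at x and y
  obtain ⟨al, hal, hxA⟩ := hsplit w x hx.1
  obtain ⟨bl, hbl, hxB⟩ := hsplit u x hx.2
  obtain ⟨cl, hcl, hyC⟩ := hsplit w y hy.1
  obtain ⟨dl, hdl, hyD⟩ := hsplit u y hy.2
  have hlenA : (w ++ al).length = n + m := by rw [List.length_append, hw, hal]
  have hlenB : (u ++ bl).length = n + m := by rw [List.length_append, hu, hbl]
  have hlenC : (w ++ cl).length = n + m := by rw [List.length_append, hw, hcl]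
  have hlenD : (u ++ dl).length = n + m := by rw [List.length_append, hu, hdl]
  have hAC : w ++ al ≠ w ++ cl := by
    intro h
    exact lt_irrefl _ (hsmall _ hlenA x y hxA (by rw [h]; exact hyC))
  have hBD : u ++ bl ≠ u ++ dl := by
    intro h
    exact lt_irrefl _ (hsmall _ hlenB x y hxB (by rw [h]; exact hyD))
  have hwu_ne : ∀ (s t : List (Fin k)), w ++ s ≠ u ++ t := by
    intro s t h
    exact hne (List.append_inj h (hw.trans hu.symm)).1
  -- the vertex maps
  let fw : {l : List (Fin k) // l.length = m} → {l : List (Fin k) // l.length = n + m} :=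
    fun t => ⟨w ++ t.val, by rw [List.length_append, hw, t.2]⟩
  let fu : {l : List (Fin k) // l.length = m} → {l : List (Fin k) // l.length = n + m} :=
    fun t => ⟨u ++ t.val, by rw [List.length_append, hu, t.2]⟩
  let AdjN : {l : List (Fin k) // l.length = n + m} →
      {l : List (Fin k) // l.length = n + m} → Prop :=
    fun v z => v.val ≠ z.val ∧
      ((compWord φ v.val '' K) ∩ (compWord φ z.val '' K)).Nonempty
  have hfwinj : Function.Injective fw := by
    intro a b h
    exact Subtype.ext (List.append_cancel_left (congrArg Subtype.val h))
  have hfuinj : Function.Injective fu := by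
    intro a b h
    exact Subtype.ext (List.append_cancel_left (congrArg Subtype.val h))
  have hdisjwu : ∀ a b, fw a ≠ fu b := fun a b h => hwu_ne a.val b.val (congrArg Subtype.val h)
  have hdisjuw : ∀ a b, fu a ≠ fw b := fun a b h =>
    hwu_ne b.val a.val (congrArg Subtype.val h).symm
  have hmapw : ∀ {a b : {l : List (Fin k) // l.length = m}},
      (SimpleGraph.fromRel (fun a c : {l : List (Fin k) // l.length = m} =>
        ((compWord φ (w ++ a.val) '' K) ∩ (compWord φ (w ++ c.val) '' K)).Nonempty)).Adj a b →
      AdjN (fw a) (fw b) := by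
    intro a b hadj
    rw [SimpleGraph.fromRel_adj] at hadj
    obtain ⟨hab, hor⟩ := hadj
    refine ⟨fun hh => hab (Subtype.ext (List.append_cancel_left hh)), ?_⟩
    rcases hor with h | h
    · exact h
    · obtain ⟨pt, h1, h2⟩ := h
      exact ⟨pt, h2, h1⟩
  have hmapu : ∀ {a b : {l : List (Fin k) // l.length = m}},
      (SimpleGraph.fromRel (fun a c : {l : List (Fin k) // l.length = m} =>
        ((compWord φ (u ++ a.val) '' K) ∩ (compWord φ (u ++ c.val) '' K)).Nonempty)).Adj a b →
      AdjN (fu a) (fu b) := by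
    intro a b hadj
    rw [SimpleGraph.fromRel_adj] at hadj
    obtain ⟨hab, hor⟩ := hadj
    refine ⟨fun hh => hab (Subtype.ext (List.append_cancel_left hh)), ?_⟩
    rcases hor with h | h
    · exact h
    · obtain ⟨pt, h1, h2⟩ := h
      exact ⟨pt, h2, h1⟩
  -- the two paths
  obtain ⟨pw0⟩ := exists_path_in_side φ K hKne hKc hconn hcwcont cylsub hcover w m
    ⟨al, hal⟩ ⟨cl, hcl⟩
  obtain ⟨pu0⟩ := exists_path_in_side φ K hKne hKc hconn hcwcont cylsub hcover u m
    ⟨bl, hbl⟩ ⟨dl, hdl⟩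
  have hac : (⟨al, hal⟩ : {l : List (Fin k) // l.length = m}) ≠ ⟨cl, hcl⟩ := by
    intro h
    exact hAC (by rw [show al = cl from congrArg Subtype.val h])
  have hbd : (⟨bl, hbl⟩ : {l : List (Fin k) // l.length = m}) ≠ ⟨dl, hdl⟩ := by
    intro h
    exact hBD (by rw [show bl = dl from congrArg Subtype.val h])
  set pw := pw0.bypass with hpwdef
  have hpw : pw.IsPath := pw0.bypass_isPath
  set pu := pu0.bypass with hpudef
  have hpu : pu.IsPath := pu0.bypass_isPath
  -- cross adjacencies
  have hxAB : AdjN (fw ⟨al, hal⟩) (fu ⟨bl, hbl⟩) := ⟨hwu_ne al bl, x, hxA, hxB⟩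
  have hyCD : AdjN (fw ⟨cl, hcl⟩) (fu ⟨dl, hdl⟩) := ⟨hwu_ne cl dl, y, hyC, hyD⟩
  have hxBA : AdjN (fu ⟨bl, hbl⟩) (fw ⟨al, hal⟩) := ⟨(hwu_ne al bl).symm, x, hxB, hxA⟩
  have hyDC : AdjN (fu ⟨dl, hdl⟩) (fw ⟨cl, hcl⟩) := ⟨(hwu_ne cl dl).symm, y, hyD, hyC⟩
  have hSw := degreeSide AdjN fw fu hfwinj hmapw hdisjwu hac pw hpw
    ⟨bl, hbl⟩ ⟨dl, hdl⟩ hxAB hyCD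
  have hSu := degreeSide AdjN fu fw hfuinj hmapu hdisjuw hbd pu hpu
    ⟨al, hal⟩ ⟨cl, hcl⟩ hxBA hyDC
  -- the set S, which has "min degree 2"
  set S : Set {l : List (Fin k) // l.length = n + m} :=
    (fw '' {t | t ∈ pw.support}) ∪ (fu '' {t | t ∈ pu.support}) with hSdef
  have hS : ∀ v ∈ S, ∃ z₁ z₂, z₁ ∈ S ∧ z₂ ∈ S ∧ z₁ ≠ z₂ ∧ AdjN v z₁ ∧ AdjN v z₂ := by
    rintro v (⟨s, hs, rfl⟩ | ⟨s, hs, rfl⟩)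
    · obtain ⟨z₁, z₂, hne12, ha1, ha2, hm1, hm2⟩ := hSw s hs
      have hconv : ∀ z, ((∃ t ∈ pw.support, fw t = z) ∨ z = fu ⟨bl, hbl⟩ ∨ z = fu ⟨dl, hdl⟩) →
          z ∈ S := by
        rintro z (⟨t, ht, rfl⟩ | rfl | rfl)
        · exact Or.inl ⟨t, ht, rfl⟩
        · exact Or.inr ⟨⟨bl, hbl⟩, pu.start_mem_support, rfl⟩
        · exact Or.inr ⟨⟨dl, hdl⟩, pu.end_mem_support, rfl⟩
      exact ⟨z₁, z₂, hconv _ hm1, hconv _ hm2, hne12, ha1, ha2⟩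
    · obtain ⟨z₁, z₂, hne12, ha1, ha2, hm1, hm2⟩ := hSu s hs
      have hconv : ∀ z, ((∃ t ∈ pu.support, fu t = z) ∨ z = fw ⟨al, hal⟩ ∨ z = fw ⟨cl, hcl⟩) →
          z ∈ S := by
        rintro z (⟨t, ht, rfl⟩ | rfl | rfl)
        · exact Or.inr ⟨t, ht, rfl⟩
        · exact Or.inl ⟨⟨al, hal⟩, pw.start_mem_support, rfl⟩
        · exact Or.inl ⟨⟨cl, hcl⟩, pw.end_mem_support, rfl⟩
      exact ⟨z₁, z₂, hconv _ hm1, hconv _ hm2, hne12, ha1, ha2⟩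
  -- pass to level n+m+1 by prepending a fixed letter
  let Fc : {l : List (Fin k) // l.length = n + m} → {l : List (Fin k) // l.length = n + m + 1} :=
    fun v => ⟨i₀ :: v.val, by rw [List.length_cons, v.2]⟩
  have hFinj : Function.Injective Fc := by
    intro a b h
    apply Subtype.ext
    have h' : i₀ :: a.val = i₀ :: b.val := congrArg Subtype.val h
    injection h'
  have hFadj : ∀ {a b}, AdjN a b → (Fc a).val ≠ (Fc b).val ∧
      ((compWord φ (Fc a).val '' K) ∩ (compWord φ (Fc b).val '' K)).Nonempty := by
    rintro a b ⟨hab, pt, hpa, hpb⟩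
    constructor
    · intro hh
      injection hh with h1 h2
      exact hab h2
    · refine ⟨φ i₀ pt, ?_, ?_⟩
      · obtain ⟨q, hq, rfl⟩ := hpa
        exact ⟨q, hq, rfl⟩
      · obtain ⟨q, hq, rfl⟩ := hpb
        exact ⟨q, hq, rfl⟩
  set T : Set {l : List (Fin k) // l.length = n + m + 1} := Fc '' S with hTdef
  have hfinlen : ∀ M : ℕ, {l : List (Fin k) | l.length = M}.Finite := fun M =>
    List.finite_length_eq (Fin k) M
  -- T absorbs all neighbors in the level (n+m+1) intersection graph
  have habs : ∀ ⦃b c : {l : List (Fin k) // l.length = n + m + 1}⦄, b ∈ T →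
      ((compWord φ b.val '' K) ∩ (compWord φ c.val '' K)).Nonempty → c ∈ T := by
    rintro b c ⟨v, hvS, rfl⟩ hR
    by_cases hbc : Fc v = c
    · exact hbc ▸ ⟨v, hvS, rfl⟩
    obtain ⟨z₁, z₂, hz₁S, hz₂S, h12, hA1, hA2⟩ := hS v hvS
    have hn1 := hFadj hA1
    have hn2 := hFadj hA2
    by_cases h1 : c = Fc z₁
    · exact h1 ▸ ⟨z₁, hz₁S, rfl⟩
    by_cases h2 : c = Fc z₂
    · exact h2 ▸ ⟨z₂, hz₂S, rfl⟩
    exfalso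
    have hb := hnb (n + m + 1) (Fc v).val (Fc v).2
    have hfin : {u' : List (Fin k) | u'.length = n + m + 1 ∧ u' ≠ (Fc v).val ∧
        (compWord φ u' '' K ∩ compWord φ (Fc v).val '' K).Nonempty}.Finite :=
      (hfinlen (n + m + 1)).subset fun l hl => hl.1
    have hmem1 : (Fc z₁).val ∈ {u' : List (Fin k) | u'.length = n + m + 1 ∧ u' ≠ (Fc v).val ∧
        (compWord φ u' '' K ∩ compWord φ (Fc v).val '' K).Nonempty} := by
      refine ⟨(Fc z₁).2, hn1.1.symm, ?_⟩
      obtain ⟨pt, hp1, hp2⟩ := hn1.2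
      exact ⟨pt, hp2, hp1⟩
    have hmem2 : (Fc z₂).val ∈ {u' : List (Fin k) | u'.length = n + m + 1 ∧ u' ≠ (Fc v).val ∧
        (compWord φ u' '' K ∩ compWord φ (Fc v).val '' K).Nonempty} := by
      refine ⟨(Fc z₂).2, hn2.1.symm, ?_⟩
      obtain ⟨pt, hp1, hp2⟩ := hn2.2
      exact ⟨pt, hp2, hp1⟩
    have hmem3 : c.val ∈ {u' : List (Fin k) | u'.length = n + m + 1 ∧ u' ≠ (Fc v).val ∧
        (compWord φ u' '' K ∩ compWord φ (Fc v).val '' K).Nonempty} := by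
      refine ⟨c.2, fun hh => hbc (Subtype.ext hh).symm, ?_⟩
      obtain ⟨pt, hp1, hp2⟩ := hR
      exact ⟨pt, hp2, hp1⟩
    have hd12 : (Fc z₁).val ≠ (Fc z₂).val := fun hh => (hFinj.ne (by
      intro hzz; exact h12 hzz : z₁ ≠ z₂)) (Subtype.ext hh)
    have hd13 : (Fc z₁).val ≠ c.val := fun hh => h1 (Subtype.ext hh.symm)
    have hd23 : (Fc z₂).val ≠ c.val := fun hh => h2 (Subtype.ext hh.symm)
    have h3 := three_le_ncard hfin hmem1 hmem2 hmem3 hd12 hd13 hd23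
    omega
  -- T is everything at level n+m+1
  have hT : ∀ z : {l : List (Fin k) // l.length = n + m + 1}, z ∈ T := by
    intro ztarget
    haveI : Finite {l : List (Fin k) // l.length = n + m + 1} :=
      (List.finite_length_eq (Fin k) (n + m + 1)).to_subtype
    have hrtg := chainConn
        (fun t : {l : List (Fin k) // l.length = n + m + 1} => compWord φ t.val '' K)
        K hconn.isPreconnected (fun t => cylcl _) (fun t => cylne _) (fun t => cylsub _)
        (by
          intro z hz
          obtain ⟨a', ha', hmem⟩ := hcover (n + m + 1) z hz
          exact Set.mem_iUnion.mpr ⟨⟨a', ha'⟩, hmem⟩)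
        (Fc (fw ⟨al, hal⟩)) ztarget
    have hbase : Fc (fw ⟨al, hal⟩) ∈ T :=
      ⟨fw ⟨al, hal⟩, Or.inl ⟨⟨al, hal⟩, pw.start_mem_support, rfl⟩, rfl⟩
    exact rtg_mem habs hrtg hbase
  -- but T misses all words starting with j₀
  have htar := hT ⟨j₀ :: (w ++ al), by rw [List.length_cons, hlenA]⟩
  obtain ⟨v, hvS, hFv⟩ := htar
  have hval : i₀ :: v.val = j₀ :: (w ++ al) := congrArg Subtype.val hFv
  injection hval with h1 _
  exact hj₀ h1.symm
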